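/- Let m be defined on ordered tuples of vertices of an oriented acyclic graph G by m(z₁,…,z_p) = Σ_{γ ∈ E(z₁,…,z_p)} C_γ, where E(z₁,…,z_p) is the set of extremal geodesics passing through z₁ ≤ … ≤ z_p in order, and C_γ > 0 is a constant assigned to each extremal geodesic multiplicatively along edges (C_γ = Π m(γ_i,γ_{i+1})/Π m(γ_j)). Then for any chain x₀ ≤ x₁ ≤ … ≤ x_m of vertices, m(x₀,…,x_m) = [m(x₀,x₁)···m(x_{m−1},x_m)] / [m(x₁)···m(x_{m−1})]. -/

import Mathlib

open scoped BigOperators Classical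
set_option linter.unusedSectionVars false

noncomputable section

variable {V : Type*} [Fintype V] [Inhabited V]

/-- The i-th vertex of a path represented as a list. -/
def vertAt (γ : List V) (i : ℕ) : V := γ.getD i default

/-- γ is an extremal geodesic: a nonempty oriented path starting at a source
and ending at a sink. -/
def IsExtremalPath (R : V → V → Prop) (γ : List V) : Prop :=
  γ ≠ [] ∧ γ.Chain' R ∧
    (∀ x z, γ.head? = some x → ¬ R z x) ∧
    (∀ x z, γ.getLast? = some x → ¬ R x z)

/-- γ passes through the vertices z 0 ≤ z 1 ≤ … ≤ z (p-1) in order. -/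
def Passes (γ : List V) (p : ℕ) (z : ℕ → V) : Prop :=
  ∃ k : ℕ → ℕ, (∀ i j, i ≤ j → j < p → k i ≤ k j) ∧
    ∀ i < p, k i < γ.length ∧ vertAt γ (k i) = z i

/-- m(z 0, …, z (p-1)): the sum of C_γ over extremal geodesics passing through
the given ordered tuple. -/
def mTuple (EG : Finset (List V)) (C : List V → ℝ) (p : ℕ) (z : ℕ → V) : ℝ :=
  ∑ γ ∈ EG, if Passes γ p z then C γ else 0

namespace SpliceAux

/-! ### vertAt lemmas -/

lemma vertAt_get {γ : List V} {i : ℕ} (h : i < γ.length) : vertAt γ i = γ[i] :=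
  List.getD_eq_getElem _ _ h

lemma vertAt_append_left {A B : List V} {i : ℕ} (h : i < A.length) :
    vertAt (A ++ B) i = vertAt A i :=
  List.getD_append _ _ _ _ h

lemma vertAt_append_right {A B : List V} {i : ℕ} (h : A.length ≤ i) :
    vertAt (A ++ B) i = vertAt B (i - A.length) :=
  List.getD_append_right _ _ _ _ h

lemma vertAt_take {L : List V} {t i : ℕ} (h : i < t) :
    vertAt (L.take t) i = vertAt L i := by
  simp only [vertAt, List.getD_eq_getElem?_getD, List.getElem?_take, if_pos h]

lemma vertAt_drop (L : List V) (t i : ℕ) : vertAt (L.drop t) i = vertAt L (t + i) := by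
  simp only [vertAt, List.getD_eq_getElem?_getD, List.getElem?_drop]

lemma chain'_rel {R : V → V → Prop} {L : List V} (h : L.Chain' R) {i : ℕ}
    (hi : i + 1 < L.length) : R (vertAt L i) (vertAt L (i + 1)) := by
  rw [vertAt_get (by omega), vertAt_get hi]
  simpa using List.isChain_iff_getElem.1 h i (by omega)

lemma chain'_rel' {R : V → V → Prop} {L : List V} (h : L.Chain' R) {i j : ℕ}
    (hij : j = i + 1) (hj : j < L.length) : R (vertAt L i) (vertAt L j) := by
  subst hij; exact chain'_rel h hj

/-! ### congruence for Passes / mTuple -/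

lemma passes_congr {γ : List V} {q : ℕ} {z z' : ℕ → V} (h : ∀ i < q, z i = z' i) :
    Passes γ q z ↔ Passes γ q z' := by
  unfold Passes
  refine exists_congr fun k => and_congr_right fun _ =>
    forall_congr' fun i => forall_congr' fun hi => ?_
  rw [h i hi]

lemma mTuple_congr (EG : Finset (List V)) (C : List V → ℝ) {q : ℕ} {z z' : ℕ → V}
    (h : ∀ i < q, z i = z' i) : mTuple EG C q z = mTuple EG C q z' := by
  unfold mTuple
  refine Finset.sum_congr rfl fun γ _ => ?_
  by_cases hp : Passes γ q z
  · rw [if_pos hp, if_pos ((passes_congr h).1 hp)]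
  · rw [if_neg hp, if_neg (fun hc => hp ((passes_congr h).2 hc))]

/-! ### PassTo -/

def PassTo (p : ℕ) (z : ℕ → V) (γ : List V) (k : ℕ) : Prop :=
  ∃ kf : ℕ → ℕ, (∀ i j, i ≤ j → j ≤ p → kf i ≤ kf j) ∧
    (∀ i ≤ p, kf i < γ.length ∧ vertAt γ (kf i) = z i) ∧ kf p = k

lemma PassTo.lt {p : ℕ} {z : ℕ → V} {γ : List V} {k : ℕ} (h : PassTo p z γ k) :
    k < γ.length ∧ vertAt γ k = z p := by
  obtain ⟨kf, -, h2, h3⟩ := h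
  rw [← h3]; exact h2 p le_rfl

lemma passes_succ_iff {γ : List V} {p : ℕ} {z : ℕ → V} :
    Passes γ (p + 1) z ↔ ∃ k, PassTo p z γ k := by
  constructor
  · rintro ⟨kf, h1, h2⟩
    exact ⟨kf p, kf, fun i j hij hj => h1 i j hij (by omega),
      fun i hi => h2 i (by omega), rfl⟩
  · rintro ⟨k, kf, h1, h2, h3⟩
    exact ⟨kf, fun i j hij hj => h1 i j hij (by omega), fun i hi => h2 i (by omega)⟩

lemma passes_succ2_iff {γ : List V} {p : ℕ} {z : ℕ → V} :
    Passes γ (p + 2) z ↔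
      ∃ k, PassTo p z γ k ∧ ∃ j, k ≤ j ∧ j < γ.length ∧ vertAt γ j = z (p + 1) := by
  constructor
  · rintro ⟨kf, h1, h2⟩
    refine ⟨kf p, ⟨kf, fun i j hij hj => h1 i j hij (by omega),
      fun i hi => h2 i (by omega), rfl⟩, kf (p + 1),
      h1 p (p + 1) (by omega) (by omega), (h2 (p + 1) (by omega)).1,
      (h2 (p + 1) (by omega)).2⟩
  · rintro ⟨k, ⟨kf, h1, h2, h3⟩, j, hkj, hjl, hjv⟩
    refine ⟨fun i => if i ≤ p then kf i else j, ?_, ?_⟩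
    · intro i i' hii' hi'
      by_cases hi : i ≤ p <;> by_cases hii : i' ≤ p
      · simp only [if_pos hi, if_pos hii]; exact h1 i i' hii' hii
      · simp only [if_pos hi, if_neg hii]
        calc kf i ≤ kf p := h1 i p hi le_rfl
        _ = k := h3
        _ ≤ j := hkj
      · omega
      · simp only [if_neg hi, if_neg hii]; exact le_rfl
    · intro i hi
      by_cases hip : i ≤ p
      · simpa only [if_pos hip] using h2 i hip
      · have hieq : i = p + 1 := by omega
        subst hieq
        simp only [if_neg hip]
        exact ⟨hjl, hjv⟩

lemma passes_one_iff {γ : List V} {z : ℕ → V} :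
    Passes γ 1 z ↔ ∃ l, l < γ.length ∧ vertAt γ l = z 0 := by
  constructor
  · rintro ⟨kf, h1, h2⟩
    exact ⟨kf 0, h2 0 (by omega)⟩
  · rintro ⟨l, h1, h2⟩
    refine ⟨fun _ => l, fun _ _ _ _ => le_rfl, ?_⟩
    intro i hi
    interval_cases i
    exact ⟨h1, h2⟩

lemma passes_two_iff {γ : List V} {z : ℕ → V} :
    Passes γ 2 z ↔ ∃ l j, l ≤ j ∧ l < γ.length ∧ j < γ.length ∧
      vertAt γ l = z 0 ∧ vertAt γ j = z 1 := by
  constructor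
  · rintro ⟨kf, h1, h2⟩
    exact ⟨kf 0, kf 1, h1 0 1 (by omega) (by omega), (h2 0 (by omega)).1,
      (h2 1 (by omega)).1, (h2 0 (by omega)).2, (h2 1 (by omega)).2⟩
  · rintro ⟨l, j, hlj, hl, hj, hlv, hjv⟩
    refine ⟨fun i => if i = 0 then l else j, ?_, ?_⟩
    · intro i i' hii' hi'
      by_cases h0 : i = 0 <;> by_cases h0' : i' = 0
      · simp [h0, h0']
      · simp only [if_pos h0, if_neg h0']; exact hlj
      · omega
      · simp only [if_neg h0, if_neg h0']; exact le_rfl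
    · intro i hi
      interval_cases i
      · simpa using ⟨hl, hlv⟩
      · simpa using ⟨hj, hjv⟩

/-! ### glue -/

def glue (x : List V) (k : ℕ) (y : List V) (l : ℕ) : List V :=
  x.take (k + 1) ++ y.drop (l + 1)

section Glue

variable {w : V} {x y : List V} {k l : ℕ}

lemma length_take_succ (hk : k < x.length) : (x.take (k + 1)).length = k + 1 := by
  rw [List.length_take]; omega

lemma glue_take (hk : k < x.length) : (glue x k y l).take (k + 1) = x.take (k + 1) :=
  List.take_left' (length_take_succ hk)

lemma glue_drop (hk : k < x.length) : (glue x k y l).drop (k + 1) = y.drop (l + 1) :=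
  List.drop_left' (length_take_succ hk)

lemma glue_length (hk : k < x.length) :
    (glue x k y l).length = (k + 1) + (y.length - (l + 1)) := by
  unfold glue; rw [List.length_append, length_take_succ hk, List.length_drop]

lemma glue_eq (hk : k < x.length) (hl : l < y.length) (hxk : vertAt x k = w)
    (hyl : vertAt y l = w) : glue x k y l = x.take k ++ y.drop l := by
  unfold glue
  rw [List.take_succ, List.getElem?_eq_getElem hk, List.drop_eq_getElem_cons hl]
  rw [vertAt_get hk] at hxk
  rw [vertAt_get hl] at hyl
  simp [hxk, hyl]

lemma glue_drop_k (hk : k < x.length) (hl : l < y.length) (hxk : vertAt x k = w)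
    (hyl : vertAt y l = w) : (glue x k y l).drop k = y.drop l := by
  rw [glue_eq hk hl hxk hyl]
  exact List.drop_left' (by rw [List.length_take]; omega)

lemma glue_vertAt_left (hk : k < x.length) {i : ℕ} (hi : i ≤ k) :
    vertAt (glue x k y l) i = vertAt x i := by
  unfold glue
  rw [vertAt_append_left (by rw [length_take_succ hk]; omega), vertAt_take (by omega)]

lemma glue_vertAt_right (hk : k < x.length) (t : ℕ) :
    vertAt (glue x k y l) (k + 1 + t) = vertAt y (l + 1 + t) := by
  unfold glue
  rw [vertAt_append_right (by rw [length_take_succ hk]; omega), length_take_succ hk, vertAt_drop]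
  congr 1; omega

lemma glue_head? (hk : k < x.length) : (glue x k y l).head? = x.head? := by
  have h1 : (x.take (k + 1)).head? = x.head? := by
    rw [List.head?_eq_getElem?, List.head?_eq_getElem?, List.getElem?_take,
      if_pos (Nat.succ_pos k)]
  show (x.take (k + 1) ++ y.drop (l + 1)).head? = x.head?
  rw [List.head?_append, h1, List.head?_eq_getElem?,
    List.getElem?_eq_getElem (show 0 < x.length by omega)]
  rfl

lemma getLast?_take (hk : k < x.length) : (x.take (k + 1)).getLast? = some (vertAt x k) := by
  rw [List.getLast?_eq_getElem?, length_take_succ hk]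
  simp only [Nat.add_sub_cancel, List.getElem?_take, if_pos (Nat.lt_succ_self k)]
  rw [List.getElem?_eq_getElem hk, vertAt_get hk]

lemma getLast?_drop {m : ℕ} (hm : m < y.length) : (y.drop m).getLast? = y.getLast? := by
  rw [List.getLast?_eq_getElem?, List.getLast?_eq_getElem?, List.length_drop,
    List.getElem?_drop]
  congr 1; omega

lemma glue_getLast? (hk : k < x.length) (hl : l < y.length) (hxk : vertAt x k = w)
    (hyl : vertAt y l = w) : (glue x k y l).getLast? = y.getLast? := by
  rcases Nat.lt_or_ge (l + 1) y.length with h | h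
  · have hne : y.drop (l + 1) ≠ [] := by
      rw [← List.length_pos_iff, List.length_drop]; omega
    show (x.take (k + 1) ++ y.drop (l + 1)).getLast? = y.getLast?
    rw [List.getLast?_append_of_ne_nil _ hne, getLast?_drop h]
  · have hd : y.drop (l + 1) = [] := List.drop_eq_nil_of_le h
    show (x.take (k + 1) ++ y.drop (l + 1)).getLast? = y.getLast?
    rw [hd, List.append_nil, getLast?_take hk, hxk]
    have hll : l = y.length - 1 := by omega
    rw [List.getLast?_eq_getElem?,
      List.getElem?_eq_getElem (show y.length - 1 < y.length by omega)]
    rw [← vertAt_get (show y.length - 1 < y.length by omega), ← hll, hyl]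

lemma glue_chain' {R : V → V → Prop} (hx : x.Chain' R) (hy : y.Chain' R)
    (hk : k < x.length) (hl : l < y.length) (hxk : vertAt x k = w)
    (hyl : vertAt y l = w) : (glue x k y l).Chain' R := by
  show (x.take (k + 1) ++ y.drop (l + 1)).Chain' R
  refine List.isChain_append.2 ⟨List.IsChain.take hx _, List.IsChain.drop hy _, ?_⟩
  intro a ha b hb
  rw [Option.mem_def, getLast?_take hk, Option.some_inj] at ha
  rw [Option.mem_def, List.head?_drop, List.getElem?_eq_some_iff] at hb
  obtain ⟨hb1, hb2⟩ := hb
  have hr : R (vertAt y l) (vertAt y (l + 1)) := chain'_rel hy hb1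
  rw [← ha, hxk, ← hyl]
  rw [vertAt_get hb1] at hr
  rwa [← hb2]

lemma glue_extremal {R : V → V → Prop} (hx : IsExtremalPath R x) (hy : IsExtremalPath R y)
    (hk : k < x.length) (hl : l < y.length) (hxk : vertAt x k = w)
    (hyl : vertAt y l = w) : IsExtremalPath R (glue x k y l) := by
  refine ⟨?_, glue_chain' hx.2.1 hy.2.1 hk hl hxk hyl, ?_, ?_⟩
  · rw [← List.length_pos_iff, glue_length hk]; omega
  · intro a b hh; rw [glue_head? hk] at hh; exact hx.2.2.1 a b hh
  · intro a b hh; rw [glue_getLast? hk hl hxk hyl] at hh; exact hy.2.2.2 a b hh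

lemma glue_glue (hk : k < x.length) (hl : l < y.length) :
    glue (glue x k y l) k (glue y l x k) l = x := by
  show (glue x k y l).take (k + 1) ++ (glue y l x k).drop (l + 1) = x
  rw [glue_take hk, glue_drop hl, List.take_append_drop]

lemma glue_pos {R : V → V → Prop} (hx : IsExtremalPath R x) (hy : IsExtremalPath R y)
    (hk : k < x.length) (hl : l < y.length) (hxk : vertAt x k = w)
    (hyl : vertAt y l = w) (h0 : 0 < k) : 0 < l := by
  by_contra hc
  have hl0 : l = 0 := by omega
  have hr : R (vertAt x (k - 1)) (vertAt x k) := chain'_rel' hx.2.1 (by omega) hk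
  have hhead : y.head? = some w := by
    rw [List.head?_eq_getElem?, List.getElem?_eq_getElem (show 0 < y.length by omega),
      ← vertAt_get (show 0 < y.length by omega), ← hl0, hyl]
  rw [hxk] at hr
  exact hy.2.2.1 w (vertAt x (k - 1)) hhead hr

lemma glue_lt {R : V → V → Prop} (hx : IsExtremalPath R x) (hy : IsExtremalPath R y)
    (hk : k < x.length) (hl : l < y.length) (hxk : vertAt x k = w)
    (hyl : vertAt y l = w) (h0 : k + 1 < x.length) : l + 1 < y.length := by
  by_contra hc
  have hr : R (vertAt x k) (vertAt x (k + 1)) := chain'_rel hx.2.1 h0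
  have hlast : y.getLast? = some w := by
    have hll : l = y.length - 1 := by omega
    rw [List.getLast?_eq_getElem?,
      List.getElem?_eq_getElem (show y.length - 1 < y.length by omega),
      ← vertAt_get (show y.length - 1 < y.length by omega), ← hll, hyl]
  rw [hxk] at hr
  exact hy.2.2.2 w (vertAt x (k + 1)) hlast hr

end Glue

/-! ### canonical positions -/

def Kc (p : ℕ) (z : ℕ → V) (γ : List V) : ℕ := sInf {k | PassTo p z γ k}

def Lc (w : V) (δ : List V) : ℕ := sInf {l | l < δ.length ∧ vertAt δ l = w}

lemma Kc_spec {p : ℕ} {z : ℕ → V} {γ : List V} (h : ∃ k, PassTo p z γ k) :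
    PassTo p z γ (Kc p z γ) :=
  Nat.sInf_mem (s := {k | PassTo p z γ k}) h

lemma Kc_le {p : ℕ} {z : ℕ → V} {γ : List V} {k : ℕ} (h : PassTo p z γ k) :
    Kc p z γ ≤ k :=
  Nat.sInf_le (s := {k | PassTo p z γ k}) h

lemma Lc_spec {w : V} {δ : List V} (h : ∃ l, l < δ.length ∧ vertAt δ l = w) :
    Lc w δ < δ.length ∧ vertAt δ (Lc w δ) = w :=
  Nat.sInf_mem (s := {l | l < δ.length ∧ vertAt δ l = w}) h

lemma Lc_le {w : V} {δ : List V} {l : ℕ} (h : l < δ.length ∧ vertAt δ l = w) :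
    Lc w δ ≤ l :=
  Nat.sInf_le (s := {l | l < δ.length ∧ vertAt δ l = w}) h

lemma passTo_glue (p : ℕ) (z : ℕ → V) {x y : List V} {k l : ℕ}
    (hK : PassTo p z x k) (hk : k < x.length) : PassTo p z (glue x k y l) k := by
  obtain ⟨kf, h1, h2, h3⟩ := hK
  refine ⟨kf, h1, fun i hi => ?_, h3⟩
  have hik : kf i ≤ k := h3 ▸ h1 i p hi le_rfl
  obtain ⟨hb, hv⟩ := h2 i hi
  exact ⟨by rw [glue_length hk]; omega, by rw [glue_vertAt_left hk hik]; exact hv⟩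

lemma passTo_unglue (p : ℕ) (z : ℕ → V) {x y : List V} {k l m : ℕ}
    (h : PassTo p z (glue x k y l) m) (hm : m ≤ k) (hk : k < x.length) :
    PassTo p z x m := by
  obtain ⟨kf, h1, h2, h3⟩ := h
  refine ⟨kf, h1, fun i hi => ?_, h3⟩
  have hik : kf i ≤ k := by have := h3 ▸ h1 i p hi le_rfl; omega
  obtain ⟨hb, hv⟩ := h2 i hi
  exact ⟨by omega, by rw [← glue_vertAt_left (y := y) (l := l) hk hik]; exact hv⟩

lemma Kc_glue (p : ℕ) (z : ℕ → V) {x y : List V} {l : ℕ}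
    (hKx : PassTo p z x (Kc p z x)) (hk : Kc p z x < x.length) :
    Kc p z (glue x (Kc p z x) y l) = Kc p z x := by
  set k := Kc p z x with hkdef
  have h1 : PassTo p z (glue x k y l) k := passTo_glue p z hKx hk
  have h2 : Kc p z (glue x k y l) ≤ k := Kc_le h1
  have h3 : PassTo p z (glue x k y l) (Kc p z (glue x k y l)) := Kc_spec ⟨k, h1⟩
  have h4 : PassTo p z x (Kc p z (glue x k y l)) := passTo_unglue p z h3 h2 hk
  exact le_antisymm h2 (Kc_le h4)

lemma Lc_glue {w : V} {x y : List V} {k : ℕ}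
    (hL : vertAt y (Lc w y) = w) (hl : Lc w y < y.length) (hk : k < x.length) :
    Lc w (glue y (Lc w y) x k) = Lc w y := by
  set l := Lc w y with hldef
  have hmem : l < (glue y l x k).length ∧ vertAt (glue y l x k) l = w :=
    ⟨by rw [glue_length hl]; omega, by rw [glue_vertAt_left hl le_rfl]; exact hL⟩
  refine le_antisymm (Lc_le hmem) ?_
  have hspec : Lc w (glue y l x k) < (glue y l x k).length ∧
      vertAt (glue y l x k) (Lc w (glue y l x k)) = w := Lc_spec ⟨l, hmem⟩
  by_contra hc
  push_neg at hc
  have hv : vertAt y (Lc w (glue y l x k)) = w := by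
    rw [← glue_vertAt_left (y := x) (l := k) hl (le_of_lt hc)]; exact hspec.2
  have : l ≤ Lc w (glue y l x k) := Lc_le ⟨by omega, hv⟩
  omega

/-! ### edge and vertex products -/

def EP (EG : Finset (List V)) (C : List V → ℝ) (L : List V) : ℝ :=
  ∏ i ∈ Finset.range (L.length - 1), mTuple EG C 2 (fun s => vertAt L (i + s))

def VP (EG : Finset (List V)) (C : List V → ℝ) (L : List V) : ℝ :=
  ∏ j ∈ Finset.Ico 1 (L.length - 1), mTuple EG C 1 (fun _ => vertAt L j)

section Products

variable (EG : Finset (List V)) (C : List V → ℝ)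

lemma ep_split {L : List V} {t : ℕ} (ht : t < L.length) :
    EP EG C L = EP EG C (L.take (t + 1)) * EP EG C (L.drop t) := by
  unfold EP
  have h1 : (L.take (t + 1)).length - 1 = t := by rw [List.length_take]; omega
  have h2 : (L.drop t).length - 1 = L.length - 1 - t := by rw [List.length_drop]; omega
  rw [h1, h2]
  have h3 : L.length - 1 = t + (L.length - 1 - t) := by omega
  conv_lhs => rw [h3, Finset.prod_range_add]
  refine congrArg₂ (· * ·) ?_ ?_
  · refine Finset.prod_congr rfl fun i hi => mTuple_congr EG C fun s hs => ?_
    rw [Finset.mem_range] at hi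
    rw [vertAt_take (by omega)]
  · refine Finset.prod_congr rfl fun i hi => mTuple_congr EG C fun s hs => ?_
    rw [vertAt_drop]
    congr 1
    omega

lemma vp_split {L : List V} {t : ℕ} (ht : t < L.length) :
    VP EG C (L.take (t + 1)) * VP EG C (L.drop t) *
      (if 0 < t ∧ t + 1 < L.length then mTuple EG C 1 (fun _ => vertAt L t) else 1)
      = VP EG C L := by
  unfold VP
  have h1 : (L.take (t + 1)).length = t + 1 := by rw [List.length_take]; omega
  by_cases h0 : 0 < t ∧ t + 1 < L.length
  · rw [if_pos h0]
    have e1 : ∏ j ∈ Finset.Ico 1 ((L.take (t + 1)).length - 1),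
        mTuple EG C 1 (fun _ => vertAt (L.take (t + 1)) j)
        = ∏ j ∈ Finset.Ico 1 t, mTuple EG C 1 (fun _ => vertAt L j) := by
      rw [h1, Nat.add_sub_cancel]
      refine Finset.prod_congr rfl fun j hj => ?_
      rw [Finset.mem_Ico] at hj
      refine mTuple_congr EG C fun i hi => ?_
      rw [vertAt_take (by omega)]
    have e2 : ∏ j ∈ Finset.Ico 1 ((L.drop t).length - 1),
        mTuple EG C 1 (fun _ => vertAt (L.drop t) j)
        = ∏ j ∈ Finset.Ico (t + 1) (L.length - 1), mTuple EG C 1 (fun _ => vertAt L j) := by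
      rw [Finset.prod_Ico_eq_prod_range, Finset.prod_Ico_eq_prod_range]
      have hlen : (L.drop t).length - 1 - 1 = L.length - 1 - (t + 1) := by
        rw [List.length_drop]; omega
      rw [hlen]
      refine Finset.prod_congr rfl fun i hi => mTuple_congr EG C fun s hs => ?_
      rw [vertAt_drop]
      congr 1
      omega
    rw [e1, e2,
      ← Finset.prod_Ico_consecutive (fun j => mTuple EG C 1 (fun _ => vertAt L j))
        (show 1 ≤ t by omega) (show t ≤ L.length - 1 by omega),
      Finset.prod_eq_prod_Ico_succ_bot (show t < L.length - 1 by omega)]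
    ring
  · rw [if_neg h0, mul_one]
    rcases Nat.eq_zero_or_pos t with ht0 | htpos
    · subst ht0
      have : (L.take 1).length - 1 = 0 := by rw [List.length_take]; omega
      rw [this, List.drop_zero]
      simp
    · have hteq : t + 1 = L.length := by omega
      have hdrop : (L.drop t).length - 1 = 0 := by rw [List.length_drop]; omega
      have htake : L.take (t + 1) = L := List.take_of_length_le (by omega)
      rw [htake, hdrop]
      simp

lemma m1_pos (hCpos : ∀ γ ∈ EG, 0 < C γ) {w : V} {y : List V} {l : ℕ}
    (hyEG : y ∈ EG) (hl : l < y.length) (hyl : vertAt y l = w) :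
    0 < mTuple EG C 1 (fun _ => w) := by
  unfold mTuple
  apply Finset.sum_pos'
  · intro γ hγ
    split_ifs with h
    · exact le_of_lt (hCpos γ hγ)
    · exact le_rfl
  · refine ⟨y, hyEG, ?_⟩
    rw [if_pos (passes_one_iff.2 ⟨l, hl, hyl⟩)]
    exact hCpos y hyEG

end Products

/-! ### the C-value identity under splicing -/

lemma glue_C {R : V → V → Prop} {EG : Finset (List V)}
    (hEG : ∀ γ, γ ∈ EG ↔ IsExtremalPath R γ) {C : List V → ℝ}
    (hCpos : ∀ γ ∈ EG, 0 < C γ)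
    (hCmul : ∀ γ ∈ EG, 2 ≤ γ.length → C γ = EP EG C γ / VP EG C γ)
    {w : V} {x y : List V} {k l : ℕ}
    (hx : IsExtremalPath R x) (hy : IsExtremalPath R y)
    (hk : k < x.length) (hl : l < y.length)
    (hxk : vertAt x k = w) (hyl : vertAt y l = w) :
    C (glue x k y l) * C (glue y l x k) = C x * C y := by
  have hxEG : x ∈ EG := (hEG x).2 hx
  have hyEG : y ∈ EG := (hEG y).2 hy
  have haX : IsExtremalPath R (glue x k y l) := glue_extremal hx hy hk hl hxk hyl
  have hbX : IsExtremalPath R (glue y l x k) := glue_extremal hy hx hl hk hyl hxk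
  by_cases hx1 : x.length = 1
  · -- degenerate case : x = [w] is an isolated vertex, so y = [w] as well
    have hk0 : k = 0 := by omega
    have hhead : x.head? = some w := by
      rw [List.head?_eq_getElem?, List.getElem?_eq_getElem (show 0 < x.length by omega),
        ← vertAt_get (show 0 < x.length by omega), ← hk0, hxk]
    have hlast : x.getLast? = some w := by
      rw [List.getLast?_eq_getElem?,
        List.getElem?_eq_getElem (show x.length - 1 < x.length by omega)]
      have h0 : x.length - 1 = 0 := by omega
      rw [← vertAt_get (show x.length - 1 < x.length by omega), h0, ← hk0, hxk]
    have hl0 : l = 0 := by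
      by_contra hc
      have hr : R (vertAt y (l - 1)) (vertAt y l) := chain'_rel' hy.2.1 (by omega) hl
      rw [hyl] at hr
      exact hx.2.2.1 w (vertAt y (l - 1)) hhead hr
    have hy1 : y.length = 1 := by
      by_contra hc
      have hr : R (vertAt y 0) (vertAt y 1) := chain'_rel hy.2.1 (by omega)
      rw [← hl0, hyl] at hr
      exact hx.2.2.2 w (vertAt y 1) hlast hr
    have hax : glue x k y l = x := by
      unfold glue
      rw [hk0, hl0, List.take_of_length_le (by omega), List.drop_eq_nil_of_le (by omega),
        List.append_nil]
    have hby : glue y l x k = y := by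
      unfold glue
      rw [hk0, hl0, List.take_of_length_le (by omega), List.drop_eq_nil_of_le (by omega),
        List.append_nil]
    rw [hax, hby]
  by_cases hy1 : y.length = 1
  · exfalso
    have hl0 : l = 0 := by omega
    have hyhead : y.head? = some w := by
      rw [List.head?_eq_getElem?, List.getElem?_eq_getElem (show 0 < y.length by omega),
        ← vertAt_get (show 0 < y.length by omega), ← hl0, hyl]
    have hylast : y.getLast? = some w := by
      rw [List.getLast?_eq_getElem?,
        List.getElem?_eq_getElem (show y.length - 1 < y.length by omega)]
      have h0 : y.length - 1 = 0 := by omega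
      rw [← vertAt_get (show y.length - 1 < y.length by omega), h0, ← hl0, hyl]
    rcases Nat.eq_zero_or_pos k with hk0 | hkpos
    · have hr : R (vertAt x 0) (vertAt x 1) := chain'_rel hx.2.1 (by omega)
      rw [← hk0, hxk] at hr
      exact hy.2.2.2 w (vertAt x 1) hylast hr
    · have hr : R (vertAt x (k - 1)) (vertAt x k) := chain'_rel' hx.2.1 (by omega) hk
      rw [hxk] at hr
      exact hy.2.2.1 w (vertAt x (k - 1)) hyhead hr
  -- main case
  have hx2 : 2 ≤ x.length := by omega
  have hy2 : 2 ≤ y.length := by omega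
  have hE1 : 0 < k ↔ 0 < l :=
    ⟨glue_pos hx hy hk hl hxk hyl, glue_pos hy hx hl hk hyl hxk⟩
  have hE2 : k + 1 < x.length ↔ l + 1 < y.length :=
    ⟨glue_lt hx hy hk hl hxk hyl, glue_lt hy hx hl hk hyl hxk⟩
  have hla : (glue x k y l).length = (k + 1) + (y.length - (l + 1)) := glue_length hk
  have hlb : (glue y l x k).length = (l + 1) + (x.length - (k + 1)) := glue_length hl
  have ha2 : 2 ≤ (glue x k y l).length := by
    rcases Nat.eq_zero_or_pos k with h | h
    · have : l = 0 := by
        by_contra hc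
        have := hE1.2 (by omega)
        omega
      omega
    · omega
  have hb2 : 2 ≤ (glue y l x k).length := by
    rcases Nat.eq_zero_or_pos l with h | h
    · have : k = 0 := by
        by_contra hc
        have := hE1.1 (by omega)
        omega
      omega
    · omega
  have haEG : glue x k y l ∈ EG := (hEG _).2 haX
  have hbEG : glue y l x k ∈ EG := (hEG _).2 hbX
  have hM : 0 < mTuple EG C 1 (fun _ => w) := m1_pos EG C hCpos hyEG hl hyl
  set M := mTuple EG C 1 (fun _ => w) with hMdef
  rw [hCmul _ haEG ha2, hCmul _ hbEG hb2, hCmul _ hxEG hx2, hCmul _ hyEG hy2,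
    div_mul_div_comm, div_mul_div_comm]
  have hEP : EP EG C (glue x k y l) * EP EG C (glue y l x k) = EP EG C x * EP EG C y := by
    have e1 : EP EG C (glue x k y l) = EP EG C (x.take (k + 1)) * EP EG C (y.drop l) := by
      rw [ep_split EG C (show k < (glue x k y l).length by omega), glue_take hk,
        glue_drop_k hk hl hxk hyl]
    have e2 : EP EG C (glue y l x k) = EP EG C (y.take (l + 1)) * EP EG C (x.drop k) := by
      rw [ep_split EG C (show l < (glue y l x k).length by omega), glue_take hl,
        glue_drop_k hl hk hyl hxk]
    have e3 : EP EG C x = EP EG C (x.take (k + 1)) * EP EG C (x.drop k) := ep_split EG C hk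
    have e4 : EP EG C y = EP EG C (y.take (l + 1)) * EP EG C (y.drop l) := ep_split EG C hl
    rw [e1, e2, e3, e4]
    ring
  have hVP : VP EG C (glue x k y l) * VP EG C (glue y l x k) = VP EG C x * VP EG C y := by
    have va : VP EG C (x.take (k + 1)) * VP EG C (y.drop l) *
        (if 0 < k ∧ l + 1 < y.length then M else 1) = VP EG C (glue x k y l) := by
      have := vp_split EG C (show k < (glue x k y l).length by omega) (L := glue x k y l) (t := k)
      rw [glue_take hk, glue_drop_k hk hl hxk hyl] at this
      rw [← this]
      congr 1
      have hvk : vertAt (glue x k y l) k = w := by rw [glue_vertAt_left hk le_rfl, hxk]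
      have hcond : (0 < k ∧ k + 1 < (glue x k y l).length) ↔ (0 < k ∧ l + 1 < y.length) := by
        constructor <;> rintro ⟨u, v⟩ <;> exact ⟨u, by omega⟩
      rw [hvk]
      by_cases hcase : 0 < k ∧ l + 1 < y.length
      · rw [if_pos hcase, if_pos (hcond.2 hcase)]
      · rw [if_neg hcase, if_neg (fun hc => hcase (hcond.1 hc))]
    have vb : VP EG C (y.take (l + 1)) * VP EG C (x.drop k) *
        (if 0 < l ∧ k + 1 < x.length then M else 1) = VP EG C (glue y l x k) := by
      have := vp_split EG C (show l < (glue y l x k).length by omega) (L := glue y l x k) (t := l)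
      rw [glue_take hl, glue_drop_k hl hk hyl hxk] at this
      rw [← this]
      congr 1
      have hvl : vertAt (glue y l x k) l = w := by rw [glue_vertAt_left hl le_rfl, hyl]
      have hcond : (0 < l ∧ l + 1 < (glue y l x k).length) ↔ (0 < l ∧ k + 1 < x.length) := by
        constructor <;> rintro ⟨u, v⟩ <;> exact ⟨u, by omega⟩
      rw [hvl]
      by_cases hcase : 0 < l ∧ k + 1 < x.length
      · rw [if_pos hcase, if_pos (hcond.2 hcase)]
      · rw [if_neg hcase, if_neg (fun hc => hcase (hcond.1 hc))]
    have vx : VP EG C (x.take (k + 1)) * VP EG C (x.drop k) *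
        (if 0 < k ∧ k + 1 < x.length then M else 1) = VP EG C x := by
      have := vp_split EG C hk (L := x) (t := k)
      rw [hxk] at this
      exact this
    have vy : VP EG C (y.take (l + 1)) * VP EG C (y.drop l) *
        (if 0 < l ∧ l + 1 < y.length then M else 1) = VP EG C y := by
      have := vp_split EG C hl (L := y) (t := l)
      rw [hyl] at this
      exact this
    have hIa : (if 0 < k ∧ l + 1 < y.length then M else 1)
        = (if 0 < l ∧ l + 1 < y.length then M else 1) := by
      have : (0 < k ∧ l + 1 < y.length) ↔ (0 < l ∧ l + 1 < y.length) := by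
        constructor <;> rintro ⟨u, v⟩ <;> exact ⟨by tauto, v⟩
      by_cases hc : 0 < k ∧ l + 1 < y.length
      · rw [if_pos hc, if_pos (this.1 hc)]
      · rw [if_neg hc, if_neg (fun h => hc (this.2 h))]
    have hIb : (if 0 < l ∧ k + 1 < x.length then M else 1)
        = (if 0 < k ∧ k + 1 < x.length then M else 1) := by
      have : (0 < l ∧ k + 1 < x.length) ↔ (0 < k ∧ k + 1 < x.length) := by
        constructor <;> rintro ⟨u, v⟩ <;> exact ⟨by tauto, v⟩
      by_cases hc : 0 < l ∧ k + 1 < x.length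
      · rw [if_pos hc, if_pos (this.1 hc)]
      · rw [if_neg hc, if_neg (fun h => hc (this.2 h))]
    have hIne : (if 0 < k ∧ k + 1 < x.length then M else 1) *
        (if 0 < l ∧ l + 1 < y.length then M else 1) ≠ 0 := by
      have h1 : (0:ℝ) < (if 0 < k ∧ k + 1 < x.length then M else 1) := by
        split_ifs
        · exact hM
        · norm_num
      have h2 : (0:ℝ) < (if 0 < l ∧ l + 1 < y.length then M else 1) := by
        split_ifs
        · exact hM
        · norm_num
      positivity
    apply mul_right_cancel₀ hIne
    calc VP EG C (glue x k y l) * VP EG C (glue y l x k) *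
        ((if 0 < k ∧ k + 1 < x.length then M else 1) *
          (if 0 < l ∧ l + 1 < y.length then M else 1))
        = (VP EG C (x.take (k + 1)) * VP EG C (y.drop l) *
            (if 0 < k ∧ l + 1 < y.length then M else 1)) *
          (VP EG C (y.take (l + 1)) * VP EG C (x.drop k) *
            (if 0 < l ∧ k + 1 < x.length then M else 1)) *
          ((if 0 < k ∧ k + 1 < x.length then M else 1) *
            (if 0 < l ∧ l + 1 < y.length then M else 1)) := by rw [va, vb]
      _ = (VP EG C (x.take (k + 1)) * VP EG C (x.drop k) *
            (if 0 < k ∧ k + 1 < x.length then M else 1)) *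
          (VP EG C (y.take (l + 1)) * VP EG C (y.drop l) *
            (if 0 < l ∧ l + 1 < y.length then M else 1)) *
          ((if 0 < k ∧ l + 1 < y.length then M else 1) *
            (if 0 < l ∧ k + 1 < x.length then M else 1)) := by ring
      _ = VP EG C x * VP EG C y *
          ((if 0 < k ∧ k + 1 < x.length then M else 1) *
            (if 0 < l ∧ l + 1 < y.length then M else 1)) := by rw [vx, vy, hIa, hIb]; ring
  rw [hEP, hVP]

/-! ### the key splicing identity -/

lemma key {R : V → V → Prop} {EG : Finset (List V)}
    (hEG : ∀ γ, γ ∈ EG ↔ IsExtremalPath R γ) {C : List V → ℝ}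
    (hCpos : ∀ γ ∈ EG, 0 < C γ)
    (hCmul : ∀ γ ∈ EG, 2 ≤ γ.length → C γ = EP EG C γ / VP EG C γ)
    (p : ℕ) (z : ℕ → V) :
    mTuple EG C (p + 2) z * mTuple EG C 1 (fun _ => z p)
      = mTuple EG C (p + 1) z * mTuple EG C 2 (fun s => z (p + s)) := by
  classical
  have hfilter : ∀ (q : ℕ) (zz : ℕ → V),
      mTuple EG C q zz = ∑ γ ∈ EG.filter (fun γ => Passes γ q zz), C γ :=
    fun q zz => (Finset.sum_filter _ _).symm
  rw [hfilter (p + 2) z, hfilter 1 _, hfilter (p + 1) z, hfilter 2 _,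
    Finset.sum_mul_sum, Finset.sum_mul_sum, ← Finset.sum_product', ← Finset.sum_product']
  -- the splicing map
  refine Finset.sum_nbij'
    (fun q => (glue q.1 (Kc p z q.1) q.2 (Lc (z p) q.2),
               glue q.2 (Lc (z p) q.2) q.1 (Kc p z q.1)))
    (fun q => (glue q.1 (Kc p z q.1) q.2 (Lc (z p) q.2),
               glue q.2 (Lc (z p) q.2) q.1 (Kc p z q.1)))
    ?_ ?_ ?_ ?_ ?_
  -- forward membership
  · rintro ⟨γ, δ⟩ hmem
    simp only [Finset.mem_product, Finset.mem_filter] at hmem ⊢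
    obtain ⟨⟨hγEG, hγP⟩, hδEG, hδP⟩ := hmem
    have hγX : IsExtremalPath R γ := (hEG γ).1 hγEG
    have hδX : IsExtremalPath R δ := (hEG δ).1 hδEG
    obtain ⟨k0, hk0, j, hjk, hjlen, hjv⟩ := passes_succ2_iff.1 hγP
    have hK : PassTo p z γ (Kc p z γ) := Kc_spec ⟨k0, hk0⟩
    have hKle : Kc p z γ ≤ k0 := Kc_le hk0
    obtain ⟨l0, hl0, hl0v⟩ := passes_one_iff.1 hδP
    have hL : Lc (z p) δ < δ.length ∧ vertAt δ (Lc (z p) δ) = z p := Lc_spec ⟨l0, hl0, hl0v⟩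
    set k := Kc p z γ with hkdef
    set l := Lc (z p) δ with hldef
    have hkl := hK.lt
    refine ⟨⟨(hEG _).2 (glue_extremal hγX hδX hkl.1 hL.1 hkl.2 hL.2), ?_⟩,
      (hEG _).2 (glue_extremal hδX hγX hL.1 hkl.1 hL.2 hkl.2), ?_⟩
    · exact passes_succ_iff.2 ⟨k, passTo_glue p z hK hkl.1⟩
    · -- Passes (glue δ l γ k) 2 (fun s => z (p + s))
      have hbl : vertAt (glue δ l γ k) l = z p := by
        rw [glue_vertAt_left hL.1 le_rfl]; exact hL.2
      have hblen : (glue δ l γ k).length = (l + 1) + (γ.length - (k + 1)) := glue_length hL.1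
      rcases eq_or_lt_of_le (show k ≤ j by omega) with heq | hlt
      · refine passes_two_iff.2 ⟨l, l, le_rfl, by omega, by omega, hbl, ?_⟩
        have hgk : vertAt γ k = z (p + 1) := by rw [heq]; exact hjv
        exact hbl.trans (hkl.2.symm.trans hgk)
      · refine passes_two_iff.2 ⟨l, l + 1 + (j - (k + 1)), by omega, by omega, by omega, hbl, ?_⟩
        have := glue_vertAt_right (x := δ) (y := γ) (k := l) (l := k) hL.1 (j - (k + 1))
        rw [this]
        have hje : k + 1 + (j - (k + 1)) = j := by omega
        rw [hje, hjv]
  -- backward membership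
  · rintro ⟨α, β⟩ hmem
    simp only [Finset.mem_product, Finset.mem_filter] at hmem ⊢
    obtain ⟨⟨hαEG, hαP⟩, hβEG, hβP⟩ := hmem
    have hαX : IsExtremalPath R α := (hEG α).1 hαEG
    have hβX : IsExtremalPath R β := (hEG β).1 hβEG
    obtain ⟨k0, hk0⟩ := passes_succ_iff.1 hαP
    have hK : PassTo p z α (Kc p z α) := Kc_spec ⟨k0, hk0⟩
    obtain ⟨l0, j, hl0j, hl0len, hjlen, hl0v, hjv⟩ := passes_two_iff.1 hβP
    have hl0v' : vertAt β l0 = z p := hl0v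
    have hjv' : vertAt β j = z (p + 1) := hjv
    have hL : Lc (z p) β < β.length ∧ vertAt β (Lc (z p) β) = z p := Lc_spec ⟨l0, hl0len, hl0v'⟩
    have hLle : Lc (z p) β ≤ l0 := Lc_le ⟨hl0len, hl0v'⟩
    set k := Kc p z α with hkdef
    set l := Lc (z p) β with hldef
    have hkl := hK.lt
    have halen : (glue α k β l).length = (k + 1) + (β.length - (l + 1)) := glue_length hkl.1
    refine ⟨⟨(hEG _).2 (glue_extremal hαX hβX hkl.1 hL.1 hkl.2 hL.2), ?_⟩,
      (hEG _).2 (glue_extremal hβX hαX hL.1 hkl.1 hL.2 hkl.2), ?_⟩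
    · refine passes_succ2_iff.2 ⟨k, passTo_glue p z hK hkl.1, ?_⟩
      rcases eq_or_lt_of_le (show l ≤ j by omega) with heq | hlt
      · refine ⟨k, le_rfl, by omega, ?_⟩
        rw [glue_vertAt_left hkl.1 le_rfl, hkl.2, ← hL.2, heq, hjv']
      · refine ⟨k + 1 + (j - (l + 1)), by omega, by omega, ?_⟩
        have := glue_vertAt_right (x := α) (y := β) (k := k) (l := l) hkl.1 (j - (l + 1))
        rw [this]
        have hje : l + 1 + (j - (l + 1)) = j := by omega
        rw [hje, hjv']
    · refine passes_one_iff.2 ⟨l, ?_, ?_⟩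
      · rw [glue_length hL.1]; omega
      · rw [glue_vertAt_left hL.1 le_rfl]; exact hL.2
  -- left inverse
  · rintro ⟨γ, δ⟩ hmem
    simp only [Finset.mem_product, Finset.mem_filter] at hmem
    obtain ⟨⟨hγEG, hγP⟩, hδEG, hδP⟩ := hmem
    obtain ⟨k0, hk0, j, hjk, hjlen, hjv⟩ := passes_succ2_iff.1 hγP
    have hK : PassTo p z γ (Kc p z γ) := Kc_spec ⟨k0, hk0⟩
    obtain ⟨l0, hl0, hl0v⟩ := passes_one_iff.1 hδP
    have hL : Lc (z p) δ < δ.length ∧ vertAt δ (Lc (z p) δ) = z p := Lc_spec ⟨l0, hl0, hl0v⟩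
    have hkl := hK.lt
    have hKg : Kc p z (glue γ (Kc p z γ) δ (Lc (z p) δ)) = Kc p z γ := Kc_glue p z hK hkl.1
    have hLg : Lc (z p) (glue δ (Lc (z p) δ) γ (Kc p z γ)) = Lc (z p) δ :=
      Lc_glue hL.2 hL.1 hkl.1
    simp only [Prod.mk.injEq]
    rw [hKg, hLg]
    exact ⟨glue_glue hkl.1 hL.1, glue_glue hL.1 hkl.1⟩
  -- right inverse
  · rintro ⟨α, β⟩ hmem
    simp only [Finset.mem_product, Finset.mem_filter] at hmem
    obtain ⟨⟨hαEG, hαP⟩, hβEG, hβP⟩ := hmem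
    obtain ⟨k0, hk0⟩ := passes_succ_iff.1 hαP
    have hK : PassTo p z α (Kc p z α) := Kc_spec ⟨k0, hk0⟩
    obtain ⟨l0, j, hl0j, hl0len, hjlen, hl0v, hjv⟩ := passes_two_iff.1 hβP
    have hl0v' : vertAt β l0 = z p := hl0v
    have hL : Lc (z p) β < β.length ∧ vertAt β (Lc (z p) β) = z p := Lc_spec ⟨l0, hl0len, hl0v'⟩
    have hkl := hK.lt
    have hKg : Kc p z (glue α (Kc p z α) β (Lc (z p) β)) = Kc p z α := Kc_glue p z hK hkl.1
    have hLg : Lc (z p) (glue β (Lc (z p) β) α (Kc p z α)) = Lc (z p) β :=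
      Lc_glue hL.2 hL.1 hkl.1
    simp only [Prod.mk.injEq]
    rw [hKg, hLg]
    exact ⟨glue_glue hkl.1 hL.1, glue_glue hL.1 hkl.1⟩
  -- values
  · rintro ⟨γ, δ⟩ hmem
    simp only [Finset.mem_product, Finset.mem_filter] at hmem
    obtain ⟨⟨hγEG, hγP⟩, hδEG, hδP⟩ := hmem
    have hγX : IsExtremalPath R γ := (hEG γ).1 hγEG
    have hδX : IsExtremalPath R δ := (hEG δ).1 hδEG
    obtain ⟨k0, hk0, j, hjk, hjlen, hjv⟩ := passes_succ2_iff.1 hγP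
    have hK : PassTo p z γ (Kc p z γ) := Kc_spec ⟨k0, hk0⟩
    obtain ⟨l0, hl0, hl0v⟩ := passes_one_iff.1 hδP
    have hL : Lc (z p) δ < δ.length ∧ vertAt δ (Lc (z p) δ) = z p := Lc_spec ⟨l0, hl0, hl0v⟩
    have hkl := hK.lt
    exact (glue_C hEG hCpos hCmul hγX hδX hkl.1 hL.1 hkl.2 hL.2).symm

end SpliceAux

theorem mTuple_multiplicative
    (R : V → V → Prop)
    (EG : Finset (List V)) (hEG : ∀ γ, γ ∈ EG ↔ IsExtremalPath R γ)
    (C : List V → ℝ) (hCpos : ∀ γ ∈ EG, 0 < C γ)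
    (hCmul : ∀ γ ∈ EG, 2 ≤ γ.length → C γ =
      (∏ i ∈ Finset.range (γ.length - 1), mTuple EG C 2 (fun s => vertAt γ (i + s))) /
        ∏ j ∈ Finset.Ico 1 (γ.length - 1), mTuple EG C 1 (fun _ => vertAt γ j))
    (mm : ℕ) (hmm : 1 ≤ mm) (z : ℕ → V)
    (hchain : ∀ i < mm, Relation.ReflTransGen R (z i) (z (i + 1))) :
    mTuple EG C (mm + 1) z =
      (∏ i ∈ Finset.range mm, mTuple EG C 2 (fun s => z (i + s))) /
        ∏ j ∈ Finset.Ico 1 mm, mTuple EG C 1 (fun _ => z j) := by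
  clear hchain
  induction mm, hmm using Nat.le_induction with
  | base =>
      rw [Finset.prod_range_one, Finset.Ico_self, Finset.prod_empty, div_one]
      exact (SpliceAux.mTuple_congr EG C (fun i hi => by rw [Nat.zero_add])).symm
  | succ n hn ih =>
      have hCmul' : ∀ γ ∈ EG, 2 ≤ γ.length →
          C γ = SpliceAux.EP EG C γ / SpliceAux.VP EG C γ := hCmul
      have hkey := SpliceAux.key hEG hCpos hCmul' n z
      by_cases hM : mTuple EG C 1 (fun _ => z n) = 0
      · have hzero : mTuple EG C (n + 1 + 1) z = 0 := by
          unfold mTuple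
          refine Finset.sum_eq_zero fun γ hγ => ?_
          rw [if_neg]
          intro hp
          obtain ⟨kf, hmono, hval⟩ := hp
          obtain ⟨hb, hv⟩ := hval n (by omega)
          have hpos := SpliceAux.m1_pos EG C hCpos hγ hb hv
          rw [hM] at hpos
          exact lt_irrefl _ hpos
        rw [hzero, Finset.prod_Ico_succ_top hn, hM, mul_zero, div_zero]
      · have heq : mTuple EG C (n + 1 + 1) z
            = mTuple EG C (n + 1) z * mTuple EG C 2 (fun s => z (n + s)) /
              mTuple EG C 1 (fun _ => z n) :=
          eq_div_of_mul_eq hM hkey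
        rw [heq, ih, Finset.prod_range_succ, Finset.prod_Ico_succ_top hn,
          div_mul_eq_mul_div, div_div]
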